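/- arXiv:2105.06862 — 3 statements merged into one kernel-verified Lean document; each statement's English description precedes it below -/
import Mathlib

section
/- Let r ∈ ℕ (r ≥ 1) and k ∈ ℤ with 0 ≤ k ≤ r, and suppose Assumption A1 holds. Then the mapping ψ ↦ Σ_{i=0}^{⌊(k−1)/2⌋−1} ‖ψ^{(i)}(-1)‖ + Σ_{i=0}^{⌊k/2⌋−1} ‖ψ^{(i)}(1)‖ + Σ_{i=δ_{0,k}}^{r−k} ‖Î[ψ(t̂)·(1+t̂)^i]‖ defines a norm on the space P_{r−1}([-1,1], ℝ^d), where ‖·‖ denotes the Euclidean norm on ℝ^d and empty sums are zero. -/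
open Set MeasureTheory
open scoped BigOperators RealInnerProductSpace

noncomputable section

/-- `ℝ^d` with the Euclidean norm. -/
abbrev Vec (d : ℕ) := EuclideanSpace ℝ (Fin d)

/-- `φ : ℝ → ℝ` is (the evaluation of) a polynomial of degree at most `s`
(`s : ℤ`; for `s < 0` this means the zero function). -/
def IsPolyR (s : ℤ) (φ : ℝ → ℝ) : Prop :=
  ∃ p : Polynomial ℝ, (∀ n : ℕ, s < (n : ℤ) → p.coeff n = 0) ∧ ∀ x : ℝ, φ x = p.eval x

/-- Vector-valued polynomials of degree at most `s`, componentwise. -/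
def IsPolyV {d : ℕ} (s : ℤ) (φ : ℝ → Vec d) : Prop :=
  ∀ i : Fin d, IsPolyR s fun x => φ x i

/-- Componentwise application of a (reference) integrator to a vector-valued function. -/
def vecI {d : ℕ} (Ih : (ℝ → ℝ) →ₗ[ℝ] ℝ) (φ : ℝ → Vec d) : Vec d :=
  WithLp.toLp 2 fun i => Ih fun x => φ x i

/-- Componentwise application of a (reference) approximation operator. -/
def vecOp {d : ℕ} (Ic : (ℝ → ℝ) →ₗ[ℝ] (ℝ → ℝ)) (φ : ℝ → Vec d) : ℝ → Vec d :=
  fun x => WithLp.toLp 2 fun i => Ic (fun y => φ y i) x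

/-- Affine map of the reference interval `(-1,1]` onto `(a,b]`. -/
def Tmap (a b x : ℝ) : ℝ := (a + b) / 2 + (b - a) / 2 * x

/-- Inverse of `Tmap a b`. -/
def Tinv (a b x : ℝ) : ℝ := (2 * x - (a + b)) / (b - a)

/-- Local (vector-valued) integrator `I_n` on `(a,b]`. -/
def locI {d : ℕ} (Ih : (ℝ → ℝ) →ₗ[ℝ] ℝ) (a b : ℝ) (φ : ℝ → Vec d) : Vec d :=
  ((b - a) / 2) • vecI Ih (φ ∘ Tmap a b)

/-- Local scalar integrator on `(a,b]`. -/
def locIs (Ih : (ℝ → ℝ) →ₗ[ℝ] ℝ) (a b : ℝ) (g : ℝ → ℝ) : ℝ :=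
  (b - a) / 2 * Ih (g ∘ Tmap a b)

/-- Local approximation operator `ℐ_n` on `(a,b]` (vector-valued). -/
def locOp {d : ℕ} (Ic : (ℝ → ℝ) →ₗ[ℝ] (ℝ → ℝ)) (a b : ℝ) (φ : ℝ → Vec d) : ℝ → Vec d :=
  fun x => vecOp Ic (φ ∘ Tmap a b) (Tinv a b x)

/-- Local approximation operator `ℐ_n` on `(a,b]` (scalar). -/
def locOpR (Ic : (ℝ → ℝ) →ₗ[ℝ] (ℝ → ℝ)) (a b : ℝ) (φ : ℝ → ℝ) : ℝ → ℝ :=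
  fun x => Ic (φ ∘ Tmap a b) (Tinv a b x)

/-- Supremum of the (Euclidean) norm over a set of times. -/
def supNorm {d : ℕ} (s : Set ℝ) (φ : ℝ → Vec d) : ℝ := ⨆ x : s, ‖φ (x : ℝ)‖

/-- Supremum of the absolute value over a set of times. -/
def supAbs (s : Set ℝ) (g : ℝ → ℝ) : ℝ := ⨆ x : s, |g (x : ℝ)|

/-- `k_𝒥 = max{⌊k/2⌋ − 1, k_𝓘, k_ℐ}`. -/
def kJ (k : ℤ) (kI kIc : ℕ) : ℕ := max (max (k.fdiv 2 - 1).toNat kI) kIc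

/-- Assumption A1 on the reference integrator. -/
def AssumptionA1 (Ih : (ℝ → ℝ) →ₗ[ℝ] ℝ) (r k : ℤ) : Prop :=
  ∀ ψ : ℝ → ℝ, IsPolyR (r - max 1 k) ψ →
    (∀ φ : ℝ → ℝ, IsPolyR (r - max 1 k) φ →
      Ih (fun x => (1 - x) ^ (k.fdiv 2).toNat * (1 + x) ^ ((k - 1).fdiv 2).natAbs *
        (ψ x * φ x)) = 0) →
    ∀ x : ℝ, ψ x = 0

/-- Assumption A2 on the reference integrator. -/
def AssumptionA2 (d : ℕ) (Ih : (ℝ → ℝ) →ₗ[ℝ] ℝ) (kI : ℕ) (C0 : ℝ) : Prop :=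
  ∀ φ : ℝ → Vec d, ContDiffOn ℝ (kI : ℕ∞) φ (Icc (-1 : ℝ) 1) →
    ‖vecI Ih φ‖ ≤ C0 * ∑ j ∈ Finset.range (kI + 1),
      supNorm (Icc (-1 : ℝ) 1) (iteratedDerivWithin j φ (Icc (-1 : ℝ) 1))

/-- Assumption A3 on the reference approximation operator. -/
def AssumptionA3 (d : ℕ) (Ic : (ℝ → ℝ) →ₗ[ℝ] (ℝ → ℝ)) (kI kIc : ℕ) (C1 : ℝ) : Prop :=
  ∀ l : ℕ, l ≤ kI → ∀ φ : ℝ → Vec d,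
    ContDiffOn ℝ ((max kIc l : ℕ) : ℕ∞) φ (Icc (-1 : ℝ) 1) →
    supNorm (Icc (-1 : ℝ) 1) (iteratedDerivWithin l (vecOp Ic φ) (Icc (-1 : ℝ) 1)) ≤
      C1 * ∑ j ∈ Finset.range (max kIc l + 1),
        supNorm (Icc (-1 : ℝ) 1) (iteratedDerivWithin j φ (Icc (-1 : ℝ) 1))

/-- Assumption A4, with smoothness level `m` playing the role of `k_𝒥`. -/
def AssumptionA4 (d : ℕ) (f : ℝ → Vec d → Vec d) (t0 T C2 : ℝ) (m : ℕ) : Prop :=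
  ∀ i : ℕ, i ≤ m → ∀ v w : ℝ → Vec d, ContDiff ℝ (⊤ : ℕ∞) v → ContDiff ℝ (⊤ : ℕ∞) w →
    ∀ᵐ s ∂(volume.restrict (Icc t0 (t0 + T))),
      ‖iteratedDeriv i (fun x => f x (v x) - f x (w x)) s‖ ≤
        C2 * ∑ l ∈ Finset.range (i + 1), ‖iteratedDeriv l (fun x => v x - w x) s‖

/-- Assumption A5a, stated for all local intervals. -/
def AssumptionA5a (d : ℕ) (Ic : (ℝ → ℝ) →ₗ[ℝ] (ℝ → ℝ)) (kI kIc : ℕ)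
    (K : ℕ) (th : Fin (K + 1) → ℝ) (Kt : Fin (K + 1) → ℕ) (C11 C12 : ℝ) : Prop :=
  Function.Injective th ∧ (∀ m, th m ∈ Icc (-1 : ℝ) 1) ∧
  ∀ a b : ℝ, a < b → b - a ≤ 1 → ∀ l : ℕ, l ≤ kI →
    ∀ φ : ℝ → Vec d, ContDiffOn ℝ (kIc : ℕ∞) φ (Icc a b) →
      ContDiffOn ℝ (l : ℕ∞) (locOp Ic a b φ) (Icc a b) ∧
      ((b - a) / 2) ^ l *
          supNorm (Ioc a b) (iteratedDerivWithin l (locOp Ic a b φ) (Icc a b)) ≤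
        C11 * ∑ m : Fin (K + 1), ∑ j ∈ Finset.range (Kt m + 1),
            ((b - a) / 2) ^ j *
              ‖iteratedDerivWithin j φ (Icc a b) (Tmap a b (th m))‖ +
        C12 * supNorm (Ioc a b) φ

/-- The conditions defining `Ĵ v` on the reference interval. -/
def JCondRef (Ih : (ℝ → ℝ) →ₗ[ℝ] ℝ) (Ic : (ℝ → ℝ) →ₗ[ℝ] (ℝ → ℝ)) (r k : ℤ)
    (v w : ℝ → ℝ) : Prop :=
  IsPolyR r w ∧
  (1 ≤ k → ∀ i : ℕ, (i : ℤ) ≤ (k - 1).fdiv 2 →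
    iteratedDeriv i w (-1) = iteratedDerivWithin i v (Icc (-1 : ℝ) 1) (-1)) ∧
  (2 ≤ k → ∀ i : ℕ, 1 ≤ i → (i : ℤ) ≤ k.fdiv 2 →
    iteratedDeriv i w 1 = iteratedDerivWithin i v (Icc (-1 : ℝ) 1) 1) ∧
  (∀ φ : ℝ → ℝ, IsPolyR (r - k) φ →
    Ih (fun x => deriv w x * φ x) + (if k = 0 then w (-1) * φ (-1) else 0) =
    Ih (fun x => Ic (derivWithin v (Icc (-1 : ℝ) 1)) x * φ x) +
      (if k = 0 then v (-1) * φ (-1) else 0))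

/-- The conditions defining the local approximation `J_n v` on `(a,b]`. -/
def JCondLoc (d : ℕ) (Ih : (ℝ → ℝ) →ₗ[ℝ] ℝ) (Ic : (ℝ → ℝ) →ₗ[ℝ] (ℝ → ℝ)) (r k : ℤ)
    (a b : ℝ) (v w : ℝ → Vec d) : Prop :=
  IsPolyV r w ∧
  (1 ≤ k → ∀ i : ℕ, (i : ℤ) ≤ (k - 1).fdiv 2 →
    iteratedDeriv i w a = iteratedDerivWithin i v (Icc a b) a) ∧
  (2 ≤ k → ∀ i : ℕ, 1 ≤ i → (i : ℤ) ≤ k.fdiv 2 →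
    iteratedDeriv i w b = iteratedDerivWithin i v (Icc a b) b) ∧
  (∀ φ : ℝ → Vec d, IsPolyV (r - k) φ →
    locIs Ih a b (fun x => ⟪deriv w x, φ x⟫) +
        (if k = 0 then ⟪w a, φ a⟫ else 0) =
      locIs Ih a b (fun x => ⟪locOp Ic a b (derivWithin v (Icc a b)) x, φ x⟫) +
        (if k = 0 then ⟪v a, φ a⟫ else 0))

/-- The conditions defining `P̂ v` on the reference interval. -/
def PCondRef (Ih : (ℝ → ℝ) →ₗ[ℝ] ℝ) (Ic : (ℝ → ℝ) →ₗ[ℝ] (ℝ → ℝ)) (r k : ℤ)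
    (v w : ℝ → ℝ) : Prop :=
  IsPolyR (r - 1) w ∧
  (3 ≤ k → ∀ i : ℕ, (i : ℤ) ≤ (k - 1).fdiv 2 - 1 →
    iteratedDeriv i w (-1) = iteratedDerivWithin i v (Icc (-1 : ℝ) 1) (-1)) ∧
  (2 ≤ k → ∀ i : ℕ, (i : ℤ) ≤ k.fdiv 2 - 1 →
    iteratedDeriv i w 1 = iteratedDerivWithin i v (Icc (-1 : ℝ) 1) 1) ∧
  (∀ φ : ℝ → ℝ, IsPolyR (r - k) φ → (k = 0 → φ (-1) = 0) →
    Ih (fun x => w x * φ x) = Ih (fun x => Ic v x * φ x))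

/-- The conditions defining the local approximation `P_n v` on `(a,b]`. -/
def PCondLoc (d : ℕ) (Ih : (ℝ → ℝ) →ₗ[ℝ] ℝ) (Ic : (ℝ → ℝ) →ₗ[ℝ] (ℝ → ℝ)) (r k : ℤ)
    (a b : ℝ) (v w : ℝ → Vec d) : Prop :=
  IsPolyV (r - 1) w ∧
  (3 ≤ k → ∀ i : ℕ, (i : ℤ) ≤ (k - 1).fdiv 2 - 1 →
    iteratedDeriv i w a = iteratedDerivWithin i v (Icc a b) a) ∧
  (2 ≤ k → ∀ i : ℕ, (i : ℤ) ≤ k.fdiv 2 - 1 →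
    iteratedDeriv i w b = iteratedDerivWithin i v (Icc a b) b) ∧
  (∀ φ : ℝ → Vec d, IsPolyV (r - k) φ → (k = 0 → φ a = 0) →
    locIs Ih a b (fun x => ⟪w x, φ x⟫) =
      locIs Ih a b (fun x => ⟪locOp Ic a b v x, φ x⟫))

/-- The local variational time discretization problem on `(a,b]` with incoming value `Uprev`. -/
def LocalVTD (d : ℕ) (Ih : (ℝ → ℝ) →ₗ[ℝ] ℝ) (Ic : (ℝ → ℝ) →ₗ[ℝ] (ℝ → ℝ)) (r k : ℤ)
    (a b : ℝ) (f : ℝ → Vec d → Vec d) (Uprev : Vec d) (U : ℝ → Vec d) : Prop :=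
  IsPolyV r U ∧
  (1 ≤ k → U a = Uprev) ∧
  (2 ≤ k → ∀ i : ℕ, (i : ℤ) ≤ k.fdiv 2 - 1 →
    iteratedDeriv (i + 1) U b = iteratedDeriv i (fun s => f s (U s)) b) ∧
  (3 ≤ k → ∀ i : ℕ, (i : ℤ) ≤ (k - 1).fdiv 2 - 1 →
    iteratedDeriv (i + 1) U a = iteratedDeriv i (fun s => f s (U s)) a) ∧
  (∀ φ : ℝ → Vec d, IsPolyV (r - k) φ →
    locIs Ih a b (fun s => ⟪deriv U s, φ s⟫) +
        (if k = 0 then ⟪U a - Uprev, φ a⟫ else 0) =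
      locIs Ih a b (fun s => ⟪locOp Ic a b (fun x => f x (U x)) s, φ s⟫))

/-- The global discrete solution of the variational time discretization:
`P n` is the local polynomial on `I_n = (t_{n-1}, t_n]`. -/
def IsVTDSolution (d : ℕ) (Ih : (ℝ → ℝ) →ₗ[ℝ] ℝ) (Ic : (ℝ → ℝ) →ₗ[ℝ] (ℝ → ℝ))
    (r k : ℤ) (t : ℕ → ℝ) (N : ℕ) (f : ℝ → Vec d → Vec d) (u0 : Vec d)
    (P : ℕ → ℝ → Vec d) : Prop :=
  ∀ n : ℕ, 1 ≤ n → n ≤ N →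
    LocalVTD d Ih Ic r k (t (n - 1)) (t n) f
      (if n = 1 then u0 else P (n - 1) (t (n - 1))) (P n)

/-- Exactness of the local integrator on polynomials of degree at most `ρ`. -/
def QuadExact (Ih : (ℝ → ℝ) →ₗ[ℝ] ℝ) (a b : ℝ) (ρ : ℤ) : Prop :=
  ∀ φ : ℝ → ℝ, IsPolyR ρ φ → (∫ x in Ioc a b, φ x) = locIs Ih a b φ

/-- `I_n[φ ψ] = I_n[(ℐ_n φ) ψ]` for all `φ ∈ P_ρ` and `ψ ∈ P_i` (the property defining
`r^𝓘_{ℐ,i}`). -/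
def QuadInterpExact (Ih : (ℝ → ℝ) →ₗ[ℝ] ℝ) (Ic : (ℝ → ℝ) →ₗ[ℝ] (ℝ → ℝ))
    (a b : ℝ) (ρ : ℤ) (i : ℕ) : Prop :=
  ∀ φ : ℝ → ℝ, IsPolyR ρ φ → ∀ ψ : ℝ → ℝ, IsPolyR (i : ℤ) ψ →
    locIs Ih a b (fun x => φ x * ψ x) = locIs Ih a b (fun x => locOpR Ic a b φ x * ψ x)

/-- The defining interpolation conditions of the Hermite-type operator `𝓘ᵃᵖᵖ_n` on `(a,b]`. -/
def IsIapp (d : ℕ) (k : ℤ) (K : ℕ) (th : Fin (K + 1) → ℝ) (Kt : Fin (K + 1) → ℕ)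
    (a b : ℝ) (R : ℕ) (J : (ℝ → Vec d) → (ℝ → Vec d)) : Prop :=
  ∀ φ : ℝ → Vec d, ContDiff ℝ (⊤ : ℕ∞) φ →
    IsPolyV (R : ℤ) (J φ) ∧
    (∀ l : ℕ, (l : ℤ) ≤ k.fdiv 2 - 1 → iteratedDeriv l (J φ) b = iteratedDeriv l φ b) ∧
    (∀ l : ℕ, (l : ℤ) ≤ (k - 1).fdiv 2 - 1 →
      iteratedDeriv l (J φ) a = iteratedDeriv l φ a) ∧
    (∀ m : Fin (K + 1), ∀ l : ℕ, l ≤ Kt m →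
      iteratedDeriv l (J φ) (Tmap a b (th m)) = iteratedDeriv l φ (Tmap a b (th m)))

/-- Composition `ℐ¹ ∘ ⋯ ∘ ℐˡ` of a finite family of operators. -/
def compOps (l : ℕ) (Ops : Fin l → ((ℝ → ℝ) →ₗ[ℝ] (ℝ → ℝ))) : (ℝ → ℝ) → (ℝ → ℝ) :=
  (List.ofFn (fun j : Fin l => (Ops j : (ℝ → ℝ) → (ℝ → ℝ)))).foldr (· ∘ ·) id

/-- The candidate norm of Lemma 3.2 on `P_{r-1}([-1,1], ℝ^d)`. -/
def refNormMap (d : ℕ) (Ih : (ℝ → ℝ) →ₗ[ℝ] ℝ) (r k : ℤ) (ψ : ℝ → Vec d) : ℝ :=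
  ∑ i ∈ Finset.range ((k - 1).fdiv 2).toNat, ‖iteratedDeriv i ψ (-1)‖ +
  ∑ i ∈ Finset.range (k.fdiv 2).toNat, ‖iteratedDeriv i ψ 1‖ +
  ∑ i ∈ Finset.Icc (if k = 0 then 1 else 0) (r - k).toNat,
    ‖vecI Ih (fun x => (1 + x) ^ i • ψ x)‖

section AuxLemmas

open Polynomial

private lemma aux_contDiff_eval (p : Polynomial ℝ) :
    ContDiff ℝ (⊤ : WithTop ℕ∞) fun x : ℝ => p.eval x := by
  have h : (fun x : ℝ => p.eval x)
      = fun x : ℝ => ∑ i ∈ Finset.range (p.natDegree + 1), p.coeff i * x ^ i := by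
    funext x
    exact p.eval_eq_sum_range x
  rw [h]
  exact ContDiff.sum fun i _ => contDiff_const.mul (contDiff_id.pow i)

private lemma aux_iteratedDeriv_eval (p : Polynomial ℝ) (n : ℕ) :
    iteratedDeriv n (fun y : ℝ => p.eval y) = fun x : ℝ => (derivative^[n] p).eval x := by
  induction n with
  | zero => simp
  | succ n ih =>
    rw [iteratedDeriv_succ, ih]
    funext x
    rw [Function.iterate_succ_apply']
    exact Polynomial.deriv (p := Polynomial.derivative^[n] p)

private lemma aux_clm_iteratedDeriv {F G : Type*} [NormedAddCommGroup F] [NormedSpace ℝ F]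
    [NormedAddCommGroup G] [NormedSpace ℝ G] (g : F →L[ℝ] G) {f : ℝ → F}
    (hf : ContDiff ℝ (⊤ : WithTop ℕ∞) f) (n : ℕ) (x : ℝ) :
    iteratedDeriv n (fun y => g (f y)) x = g (iteratedDeriv n f x) := by
  have h := g.iteratedFDeriv_comp_left (hf.contDiffAt (x := x)) (i := n) le_top
  rw [iteratedDeriv_eq_iteratedFDeriv, iteratedDeriv_eq_iteratedFDeriv]
  rw [show (fun y => g (f y)) = g ∘ f from rfl, h]
  rfl

private lemma aux_iteratedDeriv_comp {d : ℕ} {ψ : ℝ → Vec d} {P : Fin d → Polynomial ℝ}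
    (h : ∀ (x : ℝ) (j : Fin d), ψ x j = (P j).eval x) (n : ℕ) (x : ℝ) (j : Fin d) :
    iteratedDeriv n ψ x j = (derivative^[n] (P j)).eval x := by
  have hcd : ContDiff ℝ (⊤ : WithTop ℕ∞) ψ := by
    refine contDiff_euclidean.mpr fun j => ?_
    have hj : (fun x : ℝ => ψ x j) = fun x : ℝ => (P j).eval x := funext fun x => h x j
    rw [hj]; exact aux_contDiff_eval (P j)
  have key : iteratedDeriv n (fun y => (EuclideanSpace.proj j : Vec d →L[ℝ] ℝ) (ψ y)) x
      = (EuclideanSpace.proj j : Vec d →L[ℝ] ℝ) (iteratedDeriv n ψ x) :=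
    aux_clm_iteratedDeriv _ hcd n x
  have h2 : (fun y => (EuclideanSpace.proj j : Vec d →L[ℝ] ℝ) (ψ y))
      = fun y : ℝ => (P j).eval y := funext fun y => h y j
  rw [h2, aux_iteratedDeriv_eval] at key
  exact key.symm

private lemma aux_iter_derivative_add (n : ℕ) (p q : Polynomial ℝ) :
    derivative^[n] (p + q) = derivative^[n] p + derivative^[n] q := by
  induction n generalizing p q with
  | zero => rfl
  | succ n ih =>
    rw [Function.iterate_succ_apply, Function.iterate_succ_apply,
      Function.iterate_succ_apply, derivative_add, ih]

private lemma aux_vecI_apply {d : ℕ} (Ih : (ℝ → ℝ) →ₗ[ℝ] ℝ) (φ : ℝ → Vec d) (j : Fin d) :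
    vecI Ih φ j = Ih fun x => φ x j := rfl

private lemma aux_smul_apply {d : ℕ} (a : ℝ) (v : Vec d) (j : Fin d) : (a • v) j = a * v j := rfl

private lemma aux_add_apply {d : ℕ} (v w : Vec d) (j : Fin d) : (v + w) j = v j + w j := rfl

private lemma aux_zero_apply {d : ℕ} (j : Fin d) : (0 : Vec d) j = 0 := rfl

private lemma aux_vec_ext {d : ℕ} {v w : Vec d} (h : ∀ j, v j = w j) : v = w := PiLp.ext h

private lemma aux_scalar_core (Ih : (ℝ → ℝ) →ₗ[ℝ] ℝ) (r k : ℤ) (hr : 1 ≤ r) (h0k : 0 ≤ k)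
    (hkr : k ≤ r) (hA1 : AssumptionA1 Ih r k) (p : Polynomial ℝ)
    (hdeg : ∀ n : ℕ, r - 1 < (n : ℤ) → p.coeff n = 0)
    (h1 : ∀ i : ℕ, i < ((k - 1).fdiv 2).toNat → (derivative^[i] p).eval (-1) = 0)
    (h2 : ∀ i : ℕ, i < (k.fdiv 2).toNat → (derivative^[i] p).eval 1 = 0)
    (h3 : ∀ i : ℕ, (if k = 0 then 1 else 0) ≤ i → i ≤ (r - k).toNat →
      Ih (fun x => (1 + x) ^ i * p.eval x) = 0) :
    p = 0 := by
  by_contra hp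
  have e1 : (k - 1).fdiv 2 = (k - 1) / 2 := Int.fdiv_eq_ediv_of_nonneg _ (by norm_num)
  have e2 : k.fdiv 2 = k / 2 := Int.fdiv_eq_ediv_of_nonneg _ (by norm_num)
  set a : ℕ := ((k - 1).fdiv 2).toNat with ha
  set b : ℕ := (k.fdiv 2).toNat with hb
  have haI : a = ((k - 1) / 2).toNat := by rw [ha, e1]
  have hbI : b = (k / 2).toNat := by rw [hb, e2]
  set dlt : ℕ := if k = 0 then 1 else 0 with hdlt
  have hdlt' : (k = 0 ∧ dlt = 1) ∨ (1 ≤ k ∧ dlt = 0) := by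
    by_cases hk0 : k = 0
    · left; exact ⟨hk0, by rw [hdlt, if_pos hk0]⟩
    · right; exact ⟨by omega, by rw [hdlt, if_neg hk0]⟩
  have hAa : ((k - 1).fdiv 2).natAbs = a + dlt := by rw [e1]; omega
  have hdvd1 : (X - C (-1 : ℝ)) ^ a ∣ p := by
    rcases Nat.eq_zero_or_pos a with h0 | h0
    · rw [h0, pow_zero]; exact one_dvd p
    · have hlt : a - 1 < p.rootMultiplicity (-1) := by
        apply Polynomial.lt_rootMultiplicity_of_isRoot_iterate_derivative_of_mem_nonZeroDivisors'
          hp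
        · intro m hm; exact h1 m (by omega)
        · intro m _ hm0
          exact mem_nonZeroDivisors_of_ne_zero (Nat.cast_ne_zero.mpr hm0)
      exact dvd_trans (pow_dvd_pow _ (by omega)) (p.pow_rootMultiplicity_dvd (-1))
  have hdvd2 : (X - C (1 : ℝ)) ^ b ∣ p := by
    rcases Nat.eq_zero_or_pos b with h0 | h0
    · rw [h0, pow_zero]; exact one_dvd p
    · have hlt : b - 1 < p.rootMultiplicity 1 := by
        apply Polynomial.lt_rootMultiplicity_of_isRoot_iterate_derivative_of_mem_nonZeroDivisors'
          hp
        · intro m hm; exact h2 m (by omega)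
        · intro m _ hm0
          exact mem_nonZeroDivisors_of_ne_zero (Nat.cast_ne_zero.mpr hm0)
      exact dvd_trans (pow_dvd_pow _ (by omega)) (p.pow_rootMultiplicity_dvd 1)
  have hcop : IsCoprime ((X - C (-1 : ℝ)) ^ a) ((X - C (1 : ℝ)) ^ b) :=
    (Polynomial.isCoprime_X_sub_C_of_isUnit_sub
      (isUnit_iff_ne_zero.mpr (by norm_num : (-1 : ℝ) - 1 ≠ 0))).pow
  obtain ⟨q, hq⟩ := hcop.mul_dvd hdvd1 hdvd2
  have hq0 : q ≠ 0 := fun h => hp (by rw [hq, h, mul_zero])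
  have hnd : p.natDegree = a + b + q.natDegree := by
    rw [hq, Polynomial.natDegree_mul
        (mul_ne_zero (pow_ne_zero _ (Polynomial.X_sub_C_ne_zero _))
          (pow_ne_zero _ (Polynomial.X_sub_C_ne_zero _))) hq0,
      Polynomial.natDegree_mul (pow_ne_zero _ (Polynomial.X_sub_C_ne_zero _))
        (pow_ne_zero _ (Polynomial.X_sub_C_ne_zero _)),
      Polynomial.natDegree_pow, Polynomial.natDegree_pow, Polynomial.natDegree_X_sub_C,
      Polynomial.natDegree_X_sub_C]
    ring
  have hpd : p.natDegree ≤ (r - 1).toNat :=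
    Polynomial.natDegree_le_iff_coeff_eq_zero.mpr fun m hm => hdeg m (by omega)
  set D : ℕ := (r - max 1 k).toNat with hD
  have hqd : q.natDegree ≤ D := by omega
  have hq_eval : ∀ x : ℝ, q.eval x = 0 := by
    refine hA1 (fun y => q.eval y)
      ⟨q, fun n hn => Polynomial.coeff_eq_zero_of_natDegree_lt (by omega), fun x => rfl⟩ ?_
    intro φ hφ
    obtain ⟨Q, hQc, hQe⟩ := hφ
    have hQd : Q.natDegree ≤ D :=
      Polynomial.natDegree_le_iff_coeff_eq_zero.mpr fun m hm => hQc m (by omega)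
    have hc : ∀ x : ℝ, φ x
        = ∑ j ∈ Finset.range (D + 1), (Polynomial.taylor (-1) Q).coeff j * (x + 1) ^ j := by
      intro x
      have e : (Polynomial.taylor (-1) Q).eval (x + 1) = φ x := by
        rw [Polynomial.taylor_eval, show x + 1 + -1 = x by ring]; exact (hQe x).symm
      rw [← e, Polynomial.eval_eq_sum_range'
        (lt_of_le_of_lt (le_of_eq_of_le (Polynomial.natDegree_taylor Q (-1)) hQd)
          (Nat.lt_succ_self D))]
    show Ih (fun x => (1 - x) ^ (k.fdiv 2).toNat * (1 + x) ^ ((k - 1).fdiv 2).natAbs *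
      (q.eval x * φ x)) = 0
    have goal_eq : (fun x : ℝ => (1 - x) ^ (k.fdiv 2).toNat *
          (1 + x) ^ ((k - 1).fdiv 2).natAbs * (q.eval x * φ x))
        = ∑ j ∈ Finset.range (D + 1),
            (((-1 : ℝ) ^ b * (Polynomial.taylor (-1) Q).coeff j) •
              fun x : ℝ => (1 + x) ^ (dlt + j) * p.eval x) := by
      funext x
      rw [Finset.sum_apply]
      rw [hAa, ← hb, hc x]
      have hpx : p.eval x = (x + 1) ^ a * ((x - 1) ^ b * q.eval x) := by
        rw [hq]
        simp only [Polynomial.eval_mul, Polynomial.eval_pow, Polynomial.eval_sub,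
          Polynomial.eval_X, Polynomial.eval_C, Polynomial.eval_one]
        ring_nf
      have hb1 : (1 + x : ℝ) = x + 1 := add_comm 1 x
      have hb2 : (1 - x : ℝ) = -1 * (x - 1) := by ring
      rw [hb1, hb2, mul_pow]
      simp only [Finset.mul_sum, Pi.smul_apply, smul_eq_mul]
      refine Finset.sum_congr rfl fun j _ => ?_
      rw [hpx, pow_add, pow_add]
      ring
    rw [goal_eq, map_sum]
    refine Finset.sum_eq_zero fun j hj => ?_
    have hj' : j < D + 1 := Finset.mem_range.mp hj
    rw [_root_.map_smul, smul_eq_mul, h3 (dlt + j) (Nat.le_add_right dlt j)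
      (by omega), mul_zero]
  have hqz : q = 0 := Polynomial.funext fun x => by rw [hq_eval x]; simp
  exact hp (by rw [hq, hqz, mul_zero])

end AuxLemmas

/-- Lemma 3.2: the mapping `refNormMap` defines a norm on
`P_{r-1}([-1,1], ℝ^d)`. -/
theorem stmt_1 (d : ℕ) (r k : ℤ) (hr : 1 ≤ r) (h0k : 0 ≤ k) (hkr : k ≤ r)
    (Ih : (ℝ → ℝ) →ₗ[ℝ] ℝ) (hA1 : AssumptionA1 Ih r k) :
    (∀ ψ : ℝ → Vec d, IsPolyV (r - 1) ψ → 0 ≤ refNormMap d Ih r k ψ) ∧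
    (∀ (c : ℝ) (ψ : ℝ → Vec d), IsPolyV (r - 1) ψ →
      refNormMap d Ih r k (c • ψ) = |c| * refNormMap d Ih r k ψ) ∧
    (∀ ψ χ : ℝ → Vec d, IsPolyV (r - 1) ψ → IsPolyV (r - 1) χ →
      refNormMap d Ih r k (ψ + χ) ≤ refNormMap d Ih r k ψ + refNormMap d Ih r k χ) ∧
    (∀ ψ : ℝ → Vec d, IsPolyV (r - 1) ψ → refNormMap d Ih r k ψ = 0 → ∀ x, ψ x = 0) := by
  classical
  refine ⟨?_, ?_, ?_, ?_⟩
  · intro ψ _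
    unfold refNormMap
    have n1 : 0 ≤ ∑ i ∈ Finset.range ((k - 1).fdiv 2).toNat, ‖iteratedDeriv i ψ (-1)‖ :=
      Finset.sum_nonneg fun _ _ => norm_nonneg _
    have n2 : 0 ≤ ∑ i ∈ Finset.range (k.fdiv 2).toNat, ‖iteratedDeriv i ψ 1‖ :=
      Finset.sum_nonneg fun _ _ => norm_nonneg _
    have n3 : 0 ≤ ∑ i ∈ Finset.Icc (if k = 0 then 1 else 0) (r - k).toNat,
        ‖vecI Ih (fun x => (1 + x) ^ i • ψ x)‖ :=
      Finset.sum_nonneg fun _ _ => norm_nonneg _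
    linarith
  · intro c ψ hψ
    choose P hPc hPe using hψ
    have hPe' : ∀ (y : ℝ) (j : Fin d), ψ y j = (P j).eval y := fun y j => hPe j y
    have hPe2 : ∀ (y : ℝ) (j : Fin d), (c • ψ) y j = (Polynomial.C c * P j).eval y := by
      intro y j
      show c * ψ y j = _
      rw [hPe' y j, Polynomial.eval_mul, Polynomial.eval_C]
    have key1 : ∀ (i : ℕ) (z : ℝ), iteratedDeriv i (c • ψ) z = c • iteratedDeriv i ψ z := by
      intro i z
      refine aux_vec_ext fun j => ?_
      rw [aux_iteratedDeriv_comp hPe2 i z j, aux_smul_apply, aux_iteratedDeriv_comp hPe' i z j,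
        Polynomial.iterate_derivative_C_mul, Polynomial.eval_mul, Polynomial.eval_C]
    have key3 : ∀ i : ℕ, vecI Ih (fun y => (1 + y) ^ i • (c • ψ) y)
        = c • vecI Ih (fun y => (1 + y) ^ i • ψ y) := by
      intro i
      refine aux_vec_ext fun j => ?_
      rw [aux_smul_apply, aux_vecI_apply, aux_vecI_apply]
      have hfe : (fun y => ((1 + y) ^ i • (c • ψ) y) j)
          = c • fun y => ((1 + y) ^ i • ψ y) j := by
        funext y
        show (1 + y) ^ i * (c * ψ y j) = c * ((1 + y) ^ i * ψ y j)
        ring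
      rw [hfe, _root_.map_smul, smul_eq_mul]
    simp only [refNormMap, key1, key3, norm_smul, Real.norm_eq_abs]
    rw [← Finset.mul_sum, ← Finset.mul_sum, ← Finset.mul_sum]
    ring
  · intro ψ χ hψ hχ
    choose P hPc hPe using hψ
    choose Q hQc hQe using hχ
    have hPe' : ∀ (y : ℝ) (j : Fin d), ψ y j = (P j).eval y := fun y j => hPe j y
    have hQe' : ∀ (y : ℝ) (j : Fin d), χ y j = (Q j).eval y := fun y j => hQe j y
    have hPQ : ∀ (y : ℝ) (j : Fin d), (ψ + χ) y j = (P j + Q j).eval y := by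
      intro y j
      show ψ y j + χ y j = _
      rw [hPe' y j, hQe' y j, Polynomial.eval_add]
    have key1 : ∀ (i : ℕ) (z : ℝ),
        iteratedDeriv i (ψ + χ) z = iteratedDeriv i ψ z + iteratedDeriv i χ z := by
      intro i z
      refine aux_vec_ext fun j => ?_
      rw [aux_iteratedDeriv_comp hPQ i z j, aux_add_apply, aux_iteratedDeriv_comp hPe' i z j,
        aux_iteratedDeriv_comp hQe' i z j, aux_iter_derivative_add, Polynomial.eval_add]
    have key3 : ∀ i : ℕ, vecI Ih (fun y => (1 + y) ^ i • (ψ + χ) y)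
        = vecI Ih (fun y => (1 + y) ^ i • ψ y) + vecI Ih (fun y => (1 + y) ^ i • χ y) := by
      intro i
      refine aux_vec_ext fun j => ?_
      rw [aux_add_apply, aux_vecI_apply, aux_vecI_apply, aux_vecI_apply]
      have hfe : (fun y => ((1 + y) ^ i • (ψ + χ) y) j)
          = (fun y => ((1 + y) ^ i • ψ y) j) + fun y => ((1 + y) ^ i • χ y) j := by
        funext y
        show (1 + y) ^ i * (ψ y j + χ y j) = (1 + y) ^ i * ψ y j + (1 + y) ^ i * χ y j
        ring
      rw [hfe, map_add]
    have t1 : ∑ i ∈ Finset.range ((k - 1).fdiv 2).toNat,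
          ‖iteratedDeriv i ψ (-1) + iteratedDeriv i χ (-1)‖
        ≤ ∑ i ∈ Finset.range ((k - 1).fdiv 2).toNat, ‖iteratedDeriv i ψ (-1)‖
          + ∑ i ∈ Finset.range ((k - 1).fdiv 2).toNat, ‖iteratedDeriv i χ (-1)‖ := by
      rw [← Finset.sum_add_distrib]
      exact Finset.sum_le_sum fun i _ => norm_add_le _ _
    have t2 : ∑ i ∈ Finset.range (k.fdiv 2).toNat,
          ‖iteratedDeriv i ψ 1 + iteratedDeriv i χ 1‖
        ≤ ∑ i ∈ Finset.range (k.fdiv 2).toNat, ‖iteratedDeriv i ψ 1‖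
          + ∑ i ∈ Finset.range (k.fdiv 2).toNat, ‖iteratedDeriv i χ 1‖ := by
      rw [← Finset.sum_add_distrib]
      exact Finset.sum_le_sum fun i _ => norm_add_le _ _
    have t3 : ∑ i ∈ Finset.Icc (if k = 0 then 1 else 0) (r - k).toNat,
          ‖vecI Ih (fun y => (1 + y) ^ i • ψ y) + vecI Ih (fun y => (1 + y) ^ i • χ y)‖
        ≤ ∑ i ∈ Finset.Icc (if k = 0 then 1 else 0) (r - k).toNat,
            ‖vecI Ih (fun y => (1 + y) ^ i • ψ y)‖
          + ∑ i ∈ Finset.Icc (if k = 0 then 1 else 0) (r - k).toNat,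
            ‖vecI Ih (fun y => (1 + y) ^ i • χ y)‖ := by
      rw [← Finset.sum_add_distrib]
      exact Finset.sum_le_sum fun i _ => norm_add_le _ _
    simp only [refNormMap, key1, key3]
    linarith
  · intro ψ hψ hzero x
    choose P hPc hPe using hψ
    have hPe' : ∀ (y : ℝ) (j : Fin d), ψ y j = (P j).eval y := fun y j => hPe j y
    have n1 : 0 ≤ ∑ i ∈ Finset.range ((k - 1).fdiv 2).toNat, ‖iteratedDeriv i ψ (-1)‖ :=
      Finset.sum_nonneg fun _ _ => norm_nonneg _
    have n2 : 0 ≤ ∑ i ∈ Finset.range (k.fdiv 2).toNat, ‖iteratedDeriv i ψ 1‖ :=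
      Finset.sum_nonneg fun _ _ => norm_nonneg _
    have n3 : 0 ≤ ∑ i ∈ Finset.Icc (if k = 0 then 1 else 0) (r - k).toNat,
        ‖vecI Ih (fun y => (1 + y) ^ i • ψ y)‖ :=
      Finset.sum_nonneg fun _ _ => norm_nonneg _
    unfold refNormMap at hzero
    have hS1 : ∑ i ∈ Finset.range ((k - 1).fdiv 2).toNat, ‖iteratedDeriv i ψ (-1)‖ = 0 := by
      linarith
    have hS2 : ∑ i ∈ Finset.range (k.fdiv 2).toNat, ‖iteratedDeriv i ψ 1‖ = 0 := by
      linarith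
    have hS3 : ∑ i ∈ Finset.Icc (if k = 0 then 1 else 0) (r - k).toNat,
        ‖vecI Ih (fun y => (1 + y) ^ i • ψ y)‖ = 0 := by
      linarith
    have hder1 : ∀ i : ℕ, i < ((k - 1).fdiv 2).toNat → iteratedDeriv i ψ (-1) = 0 := by
      intro i hi
      exact norm_eq_zero.mp ((Finset.sum_eq_zero_iff_of_nonneg
        (fun _ _ => norm_nonneg _)).mp hS1 i (Finset.mem_range.mpr hi))
    have hder2 : ∀ i : ℕ, i < (k.fdiv 2).toNat → iteratedDeriv i ψ 1 = 0 := by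
      intro i hi
      exact norm_eq_zero.mp ((Finset.sum_eq_zero_iff_of_nonneg
        (fun _ _ => norm_nonneg _)).mp hS2 i (Finset.mem_range.mpr hi))
    have hI : ∀ i : ℕ, (if k = 0 then 1 else 0) ≤ i → i ≤ (r - k).toNat →
        vecI Ih (fun y => (1 + y) ^ i • ψ y) = 0 := by
      intro i hlo hhi
      exact norm_eq_zero.mp ((Finset.sum_eq_zero_iff_of_nonneg
        (fun _ _ => norm_nonneg _)).mp hS3 i (Finset.mem_Icc.mpr ⟨hlo, hhi⟩))
    have hPz : ∀ j : Fin d, P j = 0 := by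
      intro j
      refine aux_scalar_core Ih r k hr h0k hkr hA1 (P j) (hPc j) ?_ ?_ ?_
      · intro i hi
        have hc := aux_iteratedDeriv_comp hPe' i (-1) j
        rw [hder1 i hi] at hc
        simpa using hc.symm
      · intro i hi
        have hc := aux_iteratedDeriv_comp hPe' i 1 j
        rw [hder2 i hi] at hc
        simpa using hc.symm
      · intro i hlo hhi
        have hc : Ih (fun y => (1 + y) ^ i * (P j).eval y)
            = vecI Ih (fun y => (1 + y) ^ i • ψ y) j := by
          rw [aux_vecI_apply]
          congr 1
          funext y
          rw [aux_smul_apply, hPe' y j]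
        rw [hc, hI i hlo hhi]
        exact aux_zero_apply j
    refine aux_vec_ext fun j => ?_
    rw [hPe' x j, hPz j]
    simp
end
end

section
/- Let r ∈ ℕ₀ and suppose Assumption A1 holds with k = 0. Then the mapping ψ ↦ Σ_{i=0}^{r} ‖Î[ψ'(t̂)·(1+t̂)^i] + δ_{0,i}·ψ(-1)‖ defines a norm on the space P_r([-1,1], ℝ^d), where ‖·‖ denotes the Euclidean norm on ℝ^d. -/
open Set MeasureTheory
open scoped BigOperators RealInnerProductSpace

noncomputable section

/-- The candidate norm of Lemma 3.3 on `P_r([-1,1], ℝ^d)` (case `k = 0`). -/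
def refNormMapDG (d : ℕ) (Ih : (ℝ → ℝ) →ₗ[ℝ] ℝ) (r : ℕ) (ψ : ℝ → Vec d) : ℝ :=
  ∑ i ∈ Finset.range (r + 1),
    ‖vecI Ih (fun x => (1 + x) ^ i • deriv ψ x) + (if i = 0 then ψ (-1) else 0)‖

namespace Stmt2Aux

open Polynomial

lemma hasDerivAt_rep {d : ℕ} (p : Fin d → Polynomial ℝ) (ψ : ℝ → Vec d)
    (hψ : ∀ x i, ψ x i = (p i).eval x) (x : ℝ) :
    HasDerivAt ψ ((EuclideanSpace.equiv (Fin d) ℝ).symm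
      (fun i => (derivative (p i)).eval x)) x := by
  have hg : HasDerivAt (fun x => (fun i => (p i).eval x : Fin d → ℝ))
      (fun i => (derivative (p i)).eval x) x :=
    hasDerivAt_pi.2 fun i => (p i).hasDerivAt x
  have h := ((EuclideanSpace.equiv (Fin d) ℝ).symm.toContinuousLinearMap.hasFDerivAt).comp_hasDerivAt
    (l := (EuclideanSpace.equiv (Fin d) ℝ).symm) x hg
  have hfun : ψ = ⇑(EuclideanSpace.equiv (Fin d) ℝ).symm ∘ fun x i => (p i).eval x := by
    funext y
    ext i
    exact hψ y i
  rw [hfun]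
  exact h

lemma vecI_smul {d : ℕ} (Ih : (ℝ → ℝ) →ₗ[ℝ] ℝ) (c : ℝ) (F : ℝ → Vec d) :
    vecI Ih (fun x => c • F x) = c • vecI Ih F := by
  ext j
  show Ih (fun x => (c • F x) j) = c * Ih (fun x => F x j)
  rw [show (fun x => (c • F x) j) = c • (fun x => F x j) from rfl, _root_.map_smul]
  rfl

lemma vecI_add {d : ℕ} (Ih : (ℝ → ℝ) →ₗ[ℝ] ℝ) (F G : ℝ → Vec d) :
    vecI Ih (fun x => F x + G x) = vecI Ih F + vecI Ih G := by
  ext j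
  show Ih (fun x => (F x + G x) j) = Ih (fun x => F x j) + Ih (fun x => G x j)
  rw [show (fun x => (F x + G x) j) = (fun x => F x j) + (fun x => G x j) from rfl, map_add]

lemma key (Ih : (ℝ → ℝ) →ₗ[ℝ] ℝ) (r : ℕ) (hA1 : AssumptionA1 Ih (r : ℤ) 0)
    (q : Polynomial ℝ) (hq : ∀ n : ℕ, (r : ℤ) - 1 < n → q.coeff n = 0)
    (hcond : ∀ i : ℕ, 1 ≤ i → i ≤ r → Ih (fun x => (1 + x) ^ i * q.eval x) = 0) :
    ∀ x : ℝ, q.eval x = 0 := by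
  refine hA1 (fun x => q.eval x) ⟨q, ?_, fun x => rfl⟩ ?_
  · intro n hn; exact hq n (by simpa using hn)
  intro φ hφ
  obtain ⟨Q, hQc, hQe⟩ := hφ
  set Q' : Polynomial ℝ := Q.comp (X - C 1) with hQ'def
  have hQc' : ∀ n : ℕ, r ≤ n → Q'.coeff n = 0 := by
    intro n hn
    by_cases h0 : Q = 0
    · simp [hQ'def, h0]
    · have hd : Q.natDegree < r := by
        by_contra hcon
        push_neg at hcon
        have h1 : ((r : ℤ) - max 1 0) < (Q.natDegree : ℤ) := by
          have : (r : ℤ) ≤ Q.natDegree := by exact_mod_cast hcon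
          rw [show max (1:ℤ) 0 = 1 by decide]; omega
        exact Polynomial.leadingCoeff_ne_zero.mpr h0 (hQc _ h1)
      have hd' : Q'.natDegree < r := by
        rw [hQ'def, Polynomial.natDegree_comp, Polynomial.natDegree_X_sub_C, mul_one]
        exact hd
      exact Polynomial.coeff_eq_zero_of_natDegree_lt (lt_of_lt_of_le hd' hn)
  have hexp : ∀ x : ℝ, φ x = ∑ m ∈ Finset.range r, Q'.coeff m * (1 + x) ^ m := by
    intro x
    have h1 : φ x = Q'.eval (1 + x) := by
      rw [hQe, hQ'def, Polynomial.eval_comp]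
      norm_num
    rw [h1, Polynomial.eval_eq_sum_range' (n := max r (Q'.natDegree + 1))
      (lt_of_lt_of_le (Nat.lt_succ_self _) (le_max_right _ _)) (1 + x)]
    refine (Finset.sum_subset (Finset.range_subset_range.2 (le_max_left r _)) ?_).symm
    intro m _ hmr
    rw [hQc' m (by simpa using hmr)]
    ring
  have hfun : (fun x : ℝ => (1 - x) ^ ((0 : ℤ).fdiv 2).toNat *
        (1 + x) ^ (((0 : ℤ) - 1).fdiv 2).natAbs * (q.eval x * φ x)) =
      ∑ m ∈ Finset.range r, Q'.coeff m • (fun x : ℝ => (1 + x) ^ (m + 1) * q.eval x) := by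
    funext x
    have e1 : ((0 : ℤ).fdiv 2).toNat = 0 := by decide
    have e2 : (((0 : ℤ) - 1).fdiv 2).natAbs = 1 := by decide
    rw [e1, e2, hexp x, pow_zero, pow_one, one_mul, Finset.sum_apply, Finset.mul_sum,
      Finset.mul_sum]
    refine Finset.sum_congr rfl fun m _ => ?_
    simp only [Pi.smul_apply, smul_eq_mul]
    ring
  show Ih (fun x : ℝ => (1 - x) ^ ((0 : ℤ).fdiv 2).toNat *
        (1 + x) ^ (((0 : ℤ) - 1).fdiv 2).natAbs * (q.eval x * φ x)) = 0
  rw [hfun, map_sum]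
  refine Finset.sum_eq_zero fun m hm => ?_
  rw [_root_.map_smul, hcond (m + 1) (Nat.le_add_left 1 m) (Nat.succ_le_of_lt (Finset.mem_range.1 hm))]
  simp

end Stmt2Aux

/-- Lemma 3.3: for `k = 0` the mapping `refNormMapDG` defines a norm on
`P_r([-1,1], ℝ^d)`. -/
theorem stmt_2 (d : ℕ) (r : ℕ)
    (Ih : (ℝ → ℝ) →ₗ[ℝ] ℝ) (hA1 : AssumptionA1 Ih (r : ℤ) 0) :
    (∀ ψ : ℝ → Vec d, IsPolyV (r : ℤ) ψ → 0 ≤ refNormMapDG d Ih r ψ) ∧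
    (∀ (c : ℝ) (ψ : ℝ → Vec d), IsPolyV (r : ℤ) ψ →
      refNormMapDG d Ih r (c • ψ) = |c| * refNormMapDG d Ih r ψ) ∧
    (∀ ψ χ : ℝ → Vec d, IsPolyV (r : ℤ) ψ → IsPolyV (r : ℤ) χ →
      refNormMapDG d Ih r (ψ + χ) ≤ refNormMapDG d Ih r ψ + refNormMapDG d Ih r χ) ∧
    (∀ ψ : ℝ → Vec d, IsPolyV (r : ℤ) ψ → refNormMapDG d Ih r ψ = 0 → ∀ x, ψ x = 0) := by
  have hderiv : ∀ ψ : ℝ → Vec d, IsPolyV (r : ℤ) ψ → ∃ p : Fin d → Polynomial ℝ,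
      (∀ (i : Fin d) (n : ℕ), (r : ℤ) < (n : ℤ) → (p i).coeff n = 0) ∧ (∀ x i, ψ x i = (p i).eval x) ∧
      (∀ x, HasDerivAt ψ ((EuclideanSpace.equiv (Fin d) ℝ).symm
        (fun i => (Polynomial.derivative (p i)).eval x)) x) := by
    intro ψ hψ
    choose p h1 h2 using hψ
    exact ⟨p, h1, fun x i => h2 i x, fun x => Stmt2Aux.hasDerivAt_rep p ψ (fun x i => h2 i x) x⟩
  refine ⟨fun ψ _ => Finset.sum_nonneg fun i _ => norm_nonneg _, ?_, ?_, ?_⟩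
  · -- homogeneity
    intro c ψ hψ
    obtain ⟨p, hpc, hpe, hD⟩ := hderiv ψ hψ
    have hdc : ∀ x, deriv (c • ψ) x = c • deriv ψ x := by
      intro x
      have h1 : HasDerivAt (c • ψ) (c • ((EuclideanSpace.equiv (Fin d) ℝ).symm
          (fun i => (Polynomial.derivative (p i)).eval x))) x := (hD x).const_smul c
      rw [h1.deriv, (hD x).deriv]
    unfold refNormMapDG
    rw [Finset.mul_sum]
    refine Finset.sum_congr rfl fun i _ => ?_
    have h2 : (vecI Ih fun x => (1 + x) ^ i • deriv (c • ψ) x) +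
        (if i = 0 then (c • ψ) (-1) else 0) =
        c • ((vecI Ih fun x => (1 + x) ^ i • deriv ψ x) + (if i = 0 then ψ (-1) else 0)) := by
      have hfeq : (fun x => (1 + x) ^ i • deriv (c • ψ) x) =
          (fun x => c • ((1 + x) ^ i • deriv ψ x)) := by
        funext x
        rw [hdc x, smul_comm]
      rw [smul_add, hfeq, Stmt2Aux.vecI_smul]
      congr 1
      by_cases hi : i = 0 <;> simp [hi]
    rw [h2, norm_smul, Real.norm_eq_abs]
  · -- triangle
    intro ψ χ hψ hχ
    obtain ⟨p, _, _, hDψ⟩ := hderiv ψ hψ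
    obtain ⟨q, _, _, hDχ⟩ := hderiv χ hχ
    have hda : ∀ x, deriv (ψ + χ) x = deriv ψ x + deriv χ x := by
      intro x
      have h1 : HasDerivAt (ψ + χ) (((EuclideanSpace.equiv (Fin d) ℝ).symm
            (fun i => (Polynomial.derivative (p i)).eval x)) +
          ((EuclideanSpace.equiv (Fin d) ℝ).symm
            (fun i => (Polynomial.derivative (q i)).eval x))) x := (hDψ x).add (hDχ x)
      rw [h1.deriv, (hDψ x).deriv, (hDχ x).deriv]
    unfold refNormMapDG
    rw [← Finset.sum_add_distrib]
    refine Finset.sum_le_sum fun i _ => ?_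
    have h2 : (vecI Ih fun x => (1 + x) ^ i • deriv (ψ + χ) x) +
        (if i = 0 then (ψ + χ) (-1) else 0) =
        ((vecI Ih fun x => (1 + x) ^ i • deriv ψ x) + (if i = 0 then ψ (-1) else 0)) +
        ((vecI Ih fun x => (1 + x) ^ i • deriv χ x) + (if i = 0 then χ (-1) else 0)) := by
      have hfeq : (fun x => (1 + x) ^ i • deriv (ψ + χ) x) =
          (fun x => (1 + x) ^ i • deriv ψ x + (1 + x) ^ i • deriv χ x) := by
        funext x
        rw [hda x, smul_add]
      rw [add_add_add_comm, hfeq, Stmt2Aux.vecI_add]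
      congr 1
      by_cases hi : i = 0 <;> simp [hi]
    rw [h2]
    exact norm_add_le _ _
  · -- definiteness
    intro ψ hψ h0 x
    obtain ⟨p, hpc, hpe, hD⟩ := hderiv ψ hψ
    have hdval : ∀ (y : ℝ) (j : Fin d), deriv ψ y j = (Polynomial.derivative (p j)).eval y := by
      intro y j
      rw [(hD y).deriv]
      rfl
    have hterm : ∀ i ∈ Finset.range (r + 1),
        (vecI Ih fun x => (1 + x) ^ i • deriv ψ x) + (if i = 0 then ψ (-1) else 0) = 0 := by
      intro i hi
      exact norm_eq_zero.1
        ((Finset.sum_eq_zero_iff_of_nonneg (fun i _ => norm_nonneg _)).1 h0 i hi)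
    have hcomp : ∀ (i : ℕ) (j : Fin d),
        ((vecI Ih fun x => (1 + x) ^ i • deriv ψ x) + (if i = 0 then ψ (-1) else 0)) j =
        Ih (fun x => (1 + x) ^ i * (Polynomial.derivative (p j)).eval x) +
          (if i = 0 then ψ (-1) j else 0) := by
      intro i j
      have e1 : (vecI Ih fun x => (1 + x) ^ i • deriv ψ x) j =
          Ih (fun x => (1 + x) ^ i * (Polynomial.derivative (p j)).eval x) := by
        show Ih (fun x => ((1 + x) ^ i • deriv ψ x) j) = _
        congr 1
        funext y
        show (1 + y) ^ i * deriv ψ y j = _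
        rw [hdval]
      have e2 : ((if i = 0 then ψ (-1) else (0 : Vec d)) j) =
          (if i = 0 then ψ (-1) j else 0) := by
        by_cases hi : i = 0 <;> simp [hi]
      calc ((vecI Ih fun x => (1 + x) ^ i • deriv ψ x) + (if i = 0 then ψ (-1) else 0)) j
          = (vecI Ih fun x => (1 + x) ^ i • deriv ψ x) j +
            ((if i = 0 then ψ (-1) else (0 : Vec d)) j) := rfl
        _ = _ := by rw [e1, e2]
    ext j
    have hq0 : ∀ y : ℝ, (Polynomial.derivative (p j)).eval y = 0 := by
      apply Stmt2Aux.key Ih r hA1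
      · intro n hn
        rw [Polynomial.coeff_derivative, hpc j (n + 1) (by push_cast; omega)]
        ring
      · intro i h1i hir
        have hz : ((vecI Ih fun x => (1 + x) ^ i • deriv ψ x) +
            (if i = 0 then ψ (-1) else (0 : Vec d))) j = (0 : Vec d) j :=
          congrArg (fun v : Vec d => v j) (hterm i (Finset.mem_range.2 (by omega)))
        rw [hcomp i j, if_neg (by omega : ¬ i = 0), add_zero] at hz
        exact hz
    have hm1 : ψ (-1) j = 0 := by
      have hz : ((vecI Ih fun x => (1 + x) ^ (0:ℕ) • deriv ψ x) +
          (if (0:ℕ) = 0 then ψ (-1) else (0 : Vec d))) j = (0 : Vec d) j :=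
        congrArg (fun v : Vec d => v j) (hterm 0 (Finset.mem_range.2 (by omega)))
      rw [hcomp 0 j, if_pos rfl] at hz
      have hfz : (fun x : ℝ => (1 + x) ^ 0 * (Polynomial.derivative (p j)).eval x) =
          (0 : ℝ → ℝ) := by
        funext y
        simp [hq0 y]
      rw [hfz, map_zero, zero_add] at hz
      exact hz
    have hder0 : Polynomial.derivative (p j) = 0 := Polynomial.funext (by simpa using hq0)
    have hC : p j = Polynomial.C ((p j).coeff 0) :=
      Polynomial.eq_C_of_derivative_eq_zero hder0
    have hc0 : (p j).coeff 0 = 0 := by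
      have := hpe (-1) j
      rw [hC] at this
      simp at this
      rw [← this]
      exact hm1
    show ψ x j = 0
    rw [hpe x j, hC, hc0]
    simp

end
end

section
/- Let r ∈ ℕ (r ≥ 1) and k ∈ ℤ with 0 ≤ k ≤ r, and suppose Assumption A1 holds. Then for every v ∈ C^{k_𝒥}([-1,1], ℝ) there exists a unique polynomial P̂v ∈ P_{r−1}([-1,1], ℝ) satisfying: (P̂v)^{(i)}(-1) = v^{(i)}(-1) for i = 0,…,⌊(k−1)/2⌋ − 1 if k ≥ 3; (P̂v)^{(i)}(1) = v^{(i)}(1) for i = 0,…,⌊k/2⌋ − 1 if k ≥ 2; and Î[(P̂v)·φ] = Î[(Î𝓘 v)·φ] for all φ ∈ P_{r−k}([-1,1], ℝ) with δ_{0,k}·φ(-1) = 0. Moreover, if the reference approximation operator Î𝓘 reproduces all polynomials of degree at most r̃, then P̂ reproduces all polynomials of degree at most min{r̃, r−1}. -/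
open Set MeasureTheory
open scoped BigOperators RealInnerProductSpace

noncomputable section

namespace Stmt16
open Polynomial

def M1 (k : ℤ) : ℕ := ((k - 1).fdiv 2).toNat
def M2 (k : ℤ) : ℕ := (k.fdiv 2).toNat
def EE (k : ℤ) : ℕ := if k = 0 then 1 else 0
def M3 (r : ℕ) (k : ℤ) : ℕ := r - M1 k - M2 k
def bas (k : ℤ) (j : ℕ) : ℝ → ℝ := fun x => (1 + x) ^ (EE k) * x ^ j

lemma fdiv2 (a : ℤ) : a.fdiv 2 = a / 2 := Int.fdiv_eq_ediv_of_nonneg a (by norm_num)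

lemma hM12 {k : ℤ} (h0k : 0 ≤ k) : (M1 k : ℤ) + (M2 k : ℤ) = max 1 k - 1 := by
  unfold M1 M2; rw [fdiv2, fdiv2]; omega

lemma hEE {k : ℤ} (h0k : 0 ≤ k) : ((k - 1).fdiv 2).natAbs = M1 k + EE k := by
  unfold M1 EE; rw [fdiv2]
  rcases eq_or_ne k 0 with h | h
  · subst h; norm_num
  · rw [if_neg h]; omega

lemma hM3sum {r : ℕ} {k : ℤ} (hr : 1 ≤ r) (h0k : 0 ≤ k) (hkr : k ≤ (r : ℤ)) :
    M1 k + M2 k + M3 r k = r := by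
  have := hM12 h0k; unfold M3; omega

lemma M1_iff {k : ℤ} (h0k : 0 ≤ k) (i : ℕ) :
    i < M1 k ↔ (3 ≤ k ∧ (i : ℤ) ≤ (k - 1).fdiv 2 - 1) := by
  unfold M1; rw [fdiv2]; omega

lemma M2_iff {k : ℤ} (h0k : 0 ≤ k) (i : ℕ) :
    i < M2 k ↔ (2 ≤ k ∧ (i : ℤ) ≤ k.fdiv 2 - 1) := by
  unfold M2; rw [fdiv2]; omega

lemma deg_lt_of_coeff {r : ℕ} {p : Polynomial ℝ}
    (hc : ∀ n : ℕ, (r : ℤ) - 1 < (n : ℤ) → p.coeff n = 0) : p.degree < (r : ℕ) := by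
  rw [degree_lt_iff_coeff_zero]
  intro m hm
  have : r ≤ m := by exact_mod_cast hm
  exact hc m (by omega)

lemma iteratedDeriv_polyeval (p : Polynomial ℝ) (n : ℕ) :
    iteratedDeriv n (fun x => p.eval x) = fun x => (derivative^[n] p).eval x := by
  induction n with
  | zero => simp
  | succ n ih =>
    rw [iteratedDeriv_succ, ih]
    funext x
    rw [Function.iterate_succ_apply']
    exact Polynomial.deriv _

lemma itDW (p : Polynomial ℝ) (n : ℕ) {x : ℝ} (hx : x ∈ Icc (-1 : ℝ) 1) :
    iteratedDerivWithin n (fun x => p.eval x) (Icc (-1 : ℝ) 1) x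
      = (derivative^[n] p).eval x := by
  induction n generalizing x with
  | zero => simp
  | succ n ih =>
    have hu : UniqueDiffOn ℝ (Icc (-1 : ℝ) 1) := uniqueDiffOn_Icc (by norm_num)
    rw [iteratedDerivWithin_succ]
    have h : derivWithin (iteratedDerivWithin n (fun x => p.eval x) (Icc (-1 : ℝ) 1))
        (Icc (-1 : ℝ) 1) x
        = derivWithin (fun y => (derivative^[n] p).eval y) (Icc (-1 : ℝ) 1) x :=
      derivWithin_congr (fun y hy => ih hy) (ih hx)
    rw [h, DifferentiableAt.derivWithin (Polynomial.differentiableAt _) (hu x hx),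
      Function.iterate_succ_apply']
    exact Polynomial.deriv _

lemma Ih_mul_decomp (Ih : (ℝ → ℝ) →ₗ[ℝ] ℝ) (w : ℝ → ℝ) (m : ℕ) (bs : ℕ → ℝ → ℝ)
    (c : ℕ → ℝ) (φ : ℝ → ℝ) (hφ : ∀ x, φ x = ∑ j ∈ Finset.range m, c j * bs j x) :
    Ih (fun x => w x * φ x) = ∑ j ∈ Finset.range m, c j * Ih (fun x => w x * bs j x) := by
  have h : (fun x => w x * φ x)
      = ∑ j ∈ Finset.range m, c j • (fun x => w x * bs j x) := by
    funext x
    simp only [Finset.sum_apply, Pi.smul_apply, smul_eq_mul, hφ x, Finset.mul_sum]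
    exact Finset.sum_congr rfl fun j _ => by ring
  rw [h, map_sum]
  exact Finset.sum_congr rfl fun j _ => by rw [_root_.map_smul]; simp

lemma dvd_of_derivs (p : Polynomial ℝ) (hp0 : p ≠ 0) (a : ℝ) (m : ℕ)
    (h : ∀ i < m, (derivative^[i] p).eval a = 0) : (X - C a) ^ m ∣ p := by
  rcases Nat.eq_zero_or_pos m with h0 | hm
  · simp [h0]
  have hlt : m - 1 < p.rootMultiplicity a := by
    apply Polynomial.lt_rootMultiplicity_of_isRoot_iterate_derivative_of_mem_nonZeroDivisors hp0
      (fun i hi => h i (by omega))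
    exact mem_nonZeroDivisors_of_ne_zero (by positivity)
  exact dvd_trans (pow_dvd_pow _ (by omega)) (p.pow_rootMultiplicity_dvd a)

lemma decomp {r : ℕ} (hr : 1 ≤ r) {k : ℤ} (h0k : 0 ≤ k) (hkr : k ≤ (r : ℤ))
    {φ : ℝ → ℝ} (hφ : IsPolyR ((r : ℤ) - k) φ) (h0 : k = 0 → φ (-1) = 0) :
    ∃ c : ℕ → ℝ, ∀ x, φ x = ∑ j ∈ Finset.range (M3 r k), c j * bas k j x := by
  obtain ⟨g, hg, hge⟩ := hφ
  have hm12 := hM12 h0k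
  rcases eq_or_ne k 0 with hk | hk
  · subst hk
    have hroot : g.IsRoot (-1) := by
      have := h0 rfl; rwa [hge (-1)] at this
    obtain ⟨g', hg'⟩ := dvd_iff_isRoot.mpr hroot
    have hM3 : M3 r 0 = r := by
      have : (M1 0 : ℤ) + (M2 0 : ℤ) = 0 := by simpa using hm12
      unfold M3; omega
    have hdeg' : g'.natDegree < r := by
      rcases eq_or_ne g' 0 with h | h
      · simp [h]; omega
      have hXC : (X - C (-1 : ℝ)) ≠ 0 := X_sub_C_ne_zero _
      have hdegg : g.natDegree ≤ r := by
        rw [natDegree_le_iff_coeff_eq_zero]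
        intro N hN; exact hg N (by push_cast; omega)
      have : g.natDegree = 1 + g'.natDegree := by
        rw [hg', natDegree_mul hXC h, natDegree_X_sub_C]
      omega
    refine ⟨fun j => g'.coeff j, fun x => ?_⟩
    rw [hge x, hg', eval_mul, eval_eq_sum_range' hdeg' x, Finset.mul_sum, hM3]
    refine Finset.sum_congr rfl fun j _ => ?_
    have hE : EE 0 = 1 := rfl
    simp only [bas, hE, pow_one, eval_sub, eval_X, eval_C]
    ring
  · have hM3 : (M3 r k : ℤ) = (r : ℤ) - k + 1 := by
      unfold M3
      have h1 : max 1 k = k := by omega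
      rw [h1] at hm12; omega
    have hdeg : g.natDegree < M3 r k := by
      have h1 : g.natDegree ≤ M3 r k - 1 := by
        rw [natDegree_le_iff_coeff_eq_zero]
        intro N hN; exact hg N (by omega)
      omega
    refine ⟨fun j => g.coeff j, fun x => ?_⟩
    rw [hge x, eval_eq_sum_range' hdeg x]
    refine Finset.sum_congr rfl fun j _ => ?_
    simp [bas, EE, hk]

lemma ker_zero {r : ℕ} (hr : 1 ≤ r) {k : ℤ} (h0k : 0 ≤ k) (hkr : k ≤ (r : ℤ))
    (Ih : (ℝ → ℝ) →ₗ[ℝ] ℝ) (hA1 : AssumptionA1 Ih (r : ℤ) k) (p : Polynomial ℝ)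
    (hpdeg : p.degree < (r : ℕ))
    (h1 : ∀ i < M1 k, (derivative^[i] p).eval (-1) = 0)
    (h2 : ∀ i < M2 k, (derivative^[i] p).eval 1 = 0)
    (h3 : ∀ φ : ℝ → ℝ, IsPolyR ((r : ℤ) - k) φ → (k = 0 → φ (-1) = 0) →
      Ih (fun x => p.eval x * φ x) = 0) :
    p = 0 := by
  by_cases hp0 : p = 0
  · exact hp0
  exfalso
  have hm12 := hM12 h0k
  obtain ⟨q, hq⟩ : (X - C (-1 : ℝ)) ^ M1 k * (X - C (1 : ℝ)) ^ M2 k ∣ p := by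
    refine IsCoprime.mul_dvd ?_ (dvd_of_derivs p hp0 _ _ h1) (dvd_of_derivs p hp0 _ _ h2)
    exact IsCoprime.pow (isCoprime_X_sub_C_of_isUnit_sub (by norm_num))
  have hW1 : ((X - C (-1 : ℝ)) ^ M1 k) ≠ 0 := pow_ne_zero _ (X_sub_C_ne_zero _)
  have hW2 : ((X - C (1 : ℝ)) ^ M2 k) ≠ 0 := pow_ne_zero _ (X_sub_C_ne_zero _)
  have hW : ((X - C (-1 : ℝ)) ^ M1 k * (X - C (1 : ℝ)) ^ M2 k) ≠ 0 := mul_ne_zero hW1 hW2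
  have hq0 : q ≠ 0 := by rintro rfl; exact hp0 (by simpa using hq)
  have hndp : p.natDegree ≤ r - 1 := by
    have := (natDegree_lt_iff_degree_lt hp0).mpr hpdeg; omega
  have hndW : ((X - C (-1 : ℝ)) ^ M1 k * (X - C (1 : ℝ)) ^ M2 k).natDegree = M1 k + M2 k := by
    rw [natDegree_mul hW1 hW2, natDegree_pow, natDegree_pow, natDegree_X_sub_C,
      natDegree_X_sub_C, mul_one, mul_one]
  have hndq : q.natDegree + (M1 k + M2 k) ≤ r - 1 := by
    have := natDegree_mul hW hq0
    rw [← hq, hndW] at this; omega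
  set ψ : ℝ → ℝ := fun x => (-1 : ℝ) ^ M2 k * q.eval x with hψ
  have hψpoly : IsPolyR ((r : ℤ) - max 1 k) ψ := by
    refine ⟨C ((-1 : ℝ) ^ M2 k) * q, fun n hn => ?_, fun x => by simp [hψ]⟩
    rw [coeff_C_mul]
    have : q.natDegree < n := by omega
    rw [coeff_eq_zero_of_natDegree_lt this, mul_zero]
  have hzero : ∀ x, ψ x = 0 := by
    apply hA1 ψ hψpoly
    intro φ hφ
    obtain ⟨gφ, hgφ, hgφe⟩ := hφ
    have hEint : (EE k : ℤ) = max 1 k - k := by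
      unfold EE
      rcases eq_or_ne k 0 with h | h
      · subst h; norm_num
      · rw [if_neg h]; omega
    set φ' : ℝ → ℝ := fun x => (1 + x) ^ EE k * φ x with hφ'
    have hφ'poly : IsPolyR ((r : ℤ) - k) φ' := by
      refine ⟨(X - C (-1 : ℝ)) ^ EE k * gφ, fun n hn => ?_, fun x => ?_⟩
      · rcases eq_or_ne gφ 0 with h | h
        · rw [h, mul_zero, coeff_zero]
        · apply coeff_eq_zero_of_natDegree_lt
          have hdgφ : gφ.natDegree ≤ ((r : ℤ) - max 1 k).toNat := by
            rw [natDegree_le_iff_coeff_eq_zero]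
            intro N hN; exact hgφ N (by omega)
          have heq : ((X - C (-1 : ℝ)) ^ EE k * gφ).natDegree = EE k + gφ.natDegree := by
            rw [natDegree_mul (pow_ne_zero _ (X_sub_C_ne_zero _)) h, natDegree_pow,
              natDegree_X_sub_C, mul_one]
          rw [heq]; omega
      · simp only [hφ', eval_mul, eval_pow, eval_sub, eval_X, eval_C, hgφe x]
        rw [show x - (-1 : ℝ) = 1 + x from by ring]
    have hgate : k = 0 → φ' (-1) = 0 := by
      intro hk; simp [hφ', EE, hk]
    have hres := h3 φ' hφ'poly hgate
    have hfun : (fun x => (1 - x) ^ (k.fdiv 2).toNat * (1 + x) ^ ((k - 1).fdiv 2).natAbs *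
        (ψ x * φ x)) = (fun x => p.eval x * φ' x) := by
      funext x
      have hpe : p.eval x = (1 + x) ^ M1 k * ((x - 1) ^ M2 k * q.eval x) := by
        rw [hq, eval_mul, eval_mul, eval_pow, eval_pow, eval_sub, eval_sub, eval_X,
          eval_C, eval_C, show x - (-1 : ℝ) = 1 + x from by ring, mul_assoc]
      have hAD : (-1 : ℝ) ^ M2 k * (1 - x) ^ M2 k = (x - 1) ^ M2 k := by
        rw [← mul_pow, show (-1 : ℝ) * (1 - x) = x - 1 from by ring]
      rw [hEE h0k, pow_add]
      show (1 - x) ^ M2 k * ((1 + x) ^ M1 k * (1 + x) ^ EE k) *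
          (((-1 : ℝ) ^ M2 k * q.eval x) * φ x) = _
      rw [hpe]
      simp only [hφ']
      set A := (1 - x) ^ M2 k with hA
      set B := (1 + x) ^ M1 k with hB
      set E := (1 + x) ^ EE k with hEe
      set D := (x - 1) ^ M2 k with hD
      set s := (-1 : ℝ) ^ M2 k with hs
      linear_combination (q.eval x * φ x * B * E) * hAD
    rwa [hfun]
  have hqz : ∀ x : ℝ, q.eval x = 0 := by
    intro x
    have h := hzero x
    simp only [hψ] at h
    rcases mul_eq_zero.mp h with h' | h'
    · exact absurd h' (by positivity)
    · exact h'
  exact hq0 (Polynomial.funext (by simpa using hqz))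

noncomputable def mulApply (c : ℝ → ℝ) : Polynomial ℝ →ₗ[ℝ] (ℝ → ℝ) where
  toFun p := fun x => p.eval x * c x
  map_add' p q := by funext x; simp [add_mul]
  map_smul' a p := by funext x; simp; ring

noncomputable def Lmap (r : ℕ) (k : ℤ) (Ih : (ℝ → ℝ) →ₗ[ℝ] ℝ) :
    Polynomial.degreeLT ℝ r →ₗ[ℝ]
      ((Fin (M1 k) → ℝ) × (Fin (M2 k) → ℝ) × (Fin (M3 r k) → ℝ)) :=
  (LinearMap.pi fun i : Fin (M1 k) =>
      (Polynomial.leval (-1)) ∘ₗ (((derivative : Polynomial ℝ →ₗ[ℝ] Polynomial ℝ) ^ (i : ℕ))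
        ∘ₗ (Polynomial.degreeLT ℝ r).subtype)).prod
  ((LinearMap.pi fun i : Fin (M2 k) =>
      (Polynomial.leval 1) ∘ₗ (((derivative : Polynomial ℝ →ₗ[ℝ] Polynomial ℝ) ^ (i : ℕ))
        ∘ₗ (Polynomial.degreeLT ℝ r).subtype)).prod
   (LinearMap.pi fun j : Fin (M3 r k) =>
      Ih ∘ₗ (mulApply (bas k (j : ℕ)) ∘ₗ (Polynomial.degreeLT ℝ r).subtype)))

lemma Lmap_fst (r : ℕ) (k : ℤ) (Ih : (ℝ → ℝ) →ₗ[ℝ] ℝ) (p : Polynomial.degreeLT ℝ r)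
    (i : Fin (M1 k)) :
    (Lmap r k Ih p).1 i = (derivative^[(i : ℕ)] (p : Polynomial ℝ)).eval (-1) := by
  simp [Lmap, Module.End.pow_apply, leval_apply]

lemma Lmap_snd (r : ℕ) (k : ℤ) (Ih : (ℝ → ℝ) →ₗ[ℝ] ℝ) (p : Polynomial.degreeLT ℝ r)
    (i : Fin (M2 k)) :
    (Lmap r k Ih p).2.1 i = (derivative^[(i : ℕ)] (p : Polynomial ℝ)).eval 1 := by
  simp [Lmap, Module.End.pow_apply, leval_apply]

lemma Lmap_trd (r : ℕ) (k : ℤ) (Ih : (ℝ → ℝ) →ₗ[ℝ] ℝ) (p : Polynomial.degreeLT ℝ r)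
    (j : Fin (M3 r k)) :
    (Lmap r k Ih p).2.2 j = Ih (fun x => (p : Polynomial ℝ).eval x * bas k (j : ℕ) x) := by
  simp [Lmap, mulApply]

lemma pcond_unique {r : ℕ} (hr : 1 ≤ r) {k : ℤ} (h0k : 0 ≤ k) (hkr : k ≤ (r : ℤ))
    (Ih : (ℝ → ℝ) →ₗ[ℝ] ℝ) (Ic : (ℝ → ℝ) →ₗ[ℝ] (ℝ → ℝ))
    (hA1 : AssumptionA1 Ih (r : ℤ) k) (v w1 w2 : ℝ → ℝ)
    (hc1 : PCondRef Ih Ic (r : ℤ) k v w1) (hc2 : PCondRef Ih Ic (r : ℤ) k v w2) :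
    w1 = w2 := by
  obtain ⟨⟨p1, hp1c, hp1e⟩, hl1, hr1, hq1⟩ := hc1
  obtain ⟨⟨p2, hp2c, hp2e⟩, hl2, hr2, hq2⟩ := hc2
  have hw1 : w1 = fun x => p1.eval x := funext hp1e
  have hw2 : w2 = fun x => p2.eval x := funext hp2e
  subst hw1
  subst hw2
  have hd : p1 - p2 = 0 := by
    apply ker_zero hr h0k hkr Ih hA1
    · exact lt_of_le_of_lt (degree_sub_le _ _)
        (max_lt (deg_lt_of_coeff hp1c) (deg_lt_of_coeff hp2c))
    · intro i hi
      obtain ⟨hk3, hile⟩ := (M1_iff h0k i).mp hi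
      have e1 := hl1 hk3 i hile
      have e2 := hl2 hk3 i hile
      simp only [iteratedDeriv_polyeval] at e1 e2
      simp [Polynomial.iterate_derivative_sub, e1, e2]
    · intro i hi
      obtain ⟨hk2, hile⟩ := (M2_iff h0k i).mp hi
      have e1 := hr1 hk2 i hile
      have e2 := hr2 hk2 i hile
      simp only [iteratedDeriv_polyeval] at e1 e2
      simp [Polynomial.iterate_derivative_sub, e1, e2]
    · intro φ hφ hgate
      have hfun : (fun x => (p1 - p2).eval x * φ x)
          = (fun x => p1.eval x * φ x) - (fun x => p2.eval x * φ x) := by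
        funext x; simp [sub_mul]
      rw [hfun, map_sub, hq1 φ hφ hgate, hq2 φ hφ hgate, sub_self]
  have hpp : p1 = p2 := sub_eq_zero.mp hd
  funext x
  rw [hpp]

end Stmt16

/-- Lemma 5.1: well-definedness of the reference operator `P̂` and
polynomial reproduction. -/
theorem stmt_16 (r : ℕ) (hr : 1 ≤ r) (k : ℤ) (h0k : 0 ≤ k) (hkr : k ≤ (r : ℤ))
    (kI kIc : ℕ) (Ih : (ℝ → ℝ) →ₗ[ℝ] ℝ) (Ic : (ℝ → ℝ) →ₗ[ℝ] (ℝ → ℝ))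
    (hIcSmooth : ∀ (l : ℕ) (v : ℝ → ℝ),
      ContDiffOn ℝ ((max kIc l : ℕ) : ℕ∞) v (Icc (-1 : ℝ) 1) →
      ContDiffOn ℝ (l : ℕ∞) (Ic v) (Icc (-1 : ℝ) 1))
    (hA1 : AssumptionA1 Ih (r : ℤ) k) :
    (∀ v : ℝ → ℝ, ContDiffOn ℝ ((kJ k kI kIc : ℕ) : ℕ∞) v (Icc (-1 : ℝ) 1) →
      ∃! w : ℝ → ℝ, PCondRef Ih Ic (r : ℤ) k v w) ∧
    (∀ rt : ℤ, (∀ q : ℝ → ℝ, IsPolyR rt q → Ic q = q) →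
      ∀ v : ℝ → ℝ, IsPolyR (min rt ((r : ℤ) - 1)) v →
        ∀ w : ℝ → ℝ, PCondRef Ih Ic (r : ℤ) k v w → w = v) := by
  classical
  constructor
  · intro v _
    haveI : FiniteDimensional ℝ (Polynomial.degreeLT ℝ r) :=
      LinearEquiv.finiteDimensional (Polynomial.degreeLTEquiv ℝ r).symm
    have hdim : Module.finrank ℝ (Polynomial.degreeLT ℝ r)
        = Module.finrank ℝ ((Fin (Stmt16.M1 k) → ℝ) × (Fin (Stmt16.M2 k) → ℝ) ×
            (Fin (Stmt16.M3 r k) → ℝ)) := by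
      rw [(Polynomial.degreeLTEquiv ℝ r).finrank_eq, Module.finrank_fin_fun,
        Module.finrank_prod, Module.finrank_prod, Module.finrank_fin_fun,
        Module.finrank_fin_fun, Module.finrank_fin_fun]
      have := Stmt16.hM3sum hr h0k hkr
      omega
    have hker : ∀ p : Polynomial.degreeLT ℝ r, Stmt16.Lmap r k Ih p = 0 → p = 0 := by
      intro p hp
      rw [Prod.ext_iff] at hp
      obtain ⟨hp1, hp23⟩ := hp
      rw [Prod.ext_iff] at hp23
      obtain ⟨hp2, hp3⟩ := hp23
      have hz : (p : Polynomial ℝ) = 0 := by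
        apply Stmt16.ker_zero hr h0k hkr Ih hA1
        · exact Polynomial.mem_degreeLT.mp p.2
        · intro i hi
          have h := congrFun hp1 ⟨i, hi⟩
          rw [Stmt16.Lmap_fst] at h
          simpa using h
        · intro i hi
          have h := congrFun hp2 ⟨i, hi⟩
          rw [Stmt16.Lmap_snd] at h
          simpa using h
        · intro φ hφ hgate
          obtain ⟨c, hc⟩ := Stmt16.decomp hr h0k hkr hφ hgate
          rw [Stmt16.Ih_mul_decomp Ih _ _ _ c φ hc]
          apply Finset.sum_eq_zero
          intro j hj
          have h := congrFun hp3 ⟨j, Finset.mem_range.mp hj⟩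
          rw [Stmt16.Lmap_trd] at h
          simp only [Pi.zero_apply] at h
          simp [h]
      exact Subtype.ext hz
    have hinj : Function.Injective (Stmt16.Lmap r k Ih) :=
      (injective_iff_map_eq_zero _).mpr hker
    have hsurj := (LinearMap.injective_iff_surjective_of_finrank_eq_finrank hdim).mp hinj
    obtain ⟨P, hP⟩ := hsurj ⟨fun i => iteratedDerivWithin (i : ℕ) v (Icc (-1 : ℝ) 1) (-1),
      fun i => iteratedDerivWithin (i : ℕ) v (Icc (-1 : ℝ) 1) 1,
      fun j => Ih (fun x => Ic v x * Stmt16.bas k (j : ℕ) x)⟩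
    rw [Prod.ext_iff] at hP
    obtain ⟨hP1, hP23⟩ := hP
    rw [Prod.ext_iff] at hP23
    obtain ⟨hP2, hP3⟩ := hP23
    have hPC : PCondRef Ih Ic (r : ℤ) k v (fun x => (P : Polynomial ℝ).eval x) := by
      refine ⟨⟨(P : Polynomial ℝ), fun n hn => ?_, fun x => rfl⟩, ?_, ?_, ?_⟩
      · apply Polynomial.coeff_eq_zero_of_degree_lt
        refine lt_of_lt_of_le (Polynomial.mem_degreeLT.mp P.2) ?_
        exact_mod_cast (by omega : r ≤ n)
      · intro hk3 i hi
        have hlt : i < Stmt16.M1 k := (Stmt16.M1_iff h0k i).mpr ⟨hk3, hi⟩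
        have h := congrFun hP1 ⟨i, hlt⟩
        rw [Stmt16.Lmap_fst] at h
        rw [Stmt16.iteratedDeriv_polyeval]
        exact h
      · intro hk2 i hi
        have hlt : i < Stmt16.M2 k := (Stmt16.M2_iff h0k i).mpr ⟨hk2, hi⟩
        have h := congrFun hP2 ⟨i, hlt⟩
        rw [Stmt16.Lmap_snd] at h
        rw [Stmt16.iteratedDeriv_polyeval]
        exact h
      · intro φ hφ hgate
        obtain ⟨c, hc⟩ := Stmt16.decomp hr h0k hkr hφ hgate
        rw [Stmt16.Ih_mul_decomp Ih _ _ _ c φ hc,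
          Stmt16.Ih_mul_decomp Ih (Ic v) _ _ c φ hc]
        refine Finset.sum_congr rfl fun j hj => ?_
        have h := congrFun hP3 ⟨j, Finset.mem_range.mp hj⟩
        rw [Stmt16.Lmap_trd] at h
        rw [h]
    exact ⟨_, hPC, fun w' hw' =>
      Stmt16.pcond_unique hr h0k hkr Ih Ic hA1 v w' _ hw' hPC⟩
  · intro rt hrepro v hv w hw
    obtain ⟨q, hqc, hqe⟩ := hv
    have hvpoly : IsPolyR rt v := ⟨q, fun n hn => hqc n (by omega), hqe⟩
    have hvv : PCondRef Ih Ic (r : ℤ) k v v := by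
      refine ⟨⟨q, fun n hn => hqc n (by omega), hqe⟩, ?_, ?_, ?_⟩
      · intro hk3 i hi
        rw [show v = fun x => q.eval x from funext hqe,
          Stmt16.iteratedDeriv_polyeval,
          Stmt16.itDW q i (show (-1 : ℝ) ∈ Icc (-1 : ℝ) 1 by norm_num)]
      · intro hk2 i hi
        rw [show v = fun x => q.eval x from funext hqe,
          Stmt16.iteratedDeriv_polyeval,
          Stmt16.itDW q i (show (1 : ℝ) ∈ Icc (-1 : ℝ) 1 by norm_num)]
      · intro φ hφ hgate
        rw [hrepro v hvpoly]
    exact Stmt16.pcond_unique hr h0k hkr Ih Ic hA1 v w v hw hvv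
end
end
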